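/- Let c ∈ ℝ, let I be a nonempty open interval with 0 ∉ I, and let φ : I → ℝ be a differentiable function with φ(s) > 0 for all s ∈ I, satisfying s·φ'(s) + 2·(c²s⁴ − 1)·φ(s)² + 2·φ(s) = 0 for all s ∈ I. Then there exists c₂ ∈ ℝ such that 1/φ(s) = c²s⁴ + c₂s² + 1 for all s ∈ I. Conversely, if 1/φ(s) = c²s⁴ + c₂s² + 1 > 0 on I for some c₂ ∈ ℝ, then φ satisfies this differential equation on I. -/

import Mathlib

/-- Let `c ∈ ℝ` and let `I` be a nonempty open interval with `0 ∉ I`.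
A differentiable positive function `φ` on `I` satisfies
`s φ' + 2(c²s⁴−1)φ² + 2φ = 0` on `I` if and only if `1/φ(s) = c²s⁴ + c₂s² + 1` on `I`
for some constant `c₂` (with the right-hand side positive). -/
theorem stmt_13 (c : ℝ) (I : Set ℝ) (hIo : IsOpen I) (hIc : I.OrdConnected)
    (hIne : I.Nonempty) (h0I : (0 : ℝ) ∉ I) :
    (∀ φ : ℝ → ℝ, (∀ s ∈ I, DifferentiableAt ℝ φ s) → (∀ s ∈ I, 0 < φ s) →
      (∀ s ∈ I, s * deriv φ s + 2 * (c ^ 2 * s ^ 4 - 1) * (φ s) ^ 2 + 2 * φ s = 0) →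
      ∃ c₂ : ℝ, ∀ s ∈ I, (φ s)⁻¹ = c ^ 2 * s ^ 4 + c₂ * s ^ 2 + 1) ∧
    (∀ (φ : ℝ → ℝ) (c₂ : ℝ),
      (∀ s ∈ I, (φ s)⁻¹ = c ^ 2 * s ^ 4 + c₂ * s ^ 2 + 1 ∧
        0 < c ^ 2 * s ^ 4 + c₂ * s ^ 2 + 1) →
      ∀ s ∈ I, s * deriv φ s + 2 * (c ^ 2 * s ^ 4 - 1) * (φ s) ^ 2 + 2 * φ s = 0) := by
  have hconv : Convex ℝ I := convex_iff_ordConnected.2 hIc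
  constructor
  · intro φ hdiff hpos hode
    set g : ℝ → ℝ := fun x => ((φ x)⁻¹ - c ^ 2 * x ^ 4 - 1) / x ^ 2 with hg
    have key : ∀ s ∈ I, HasDerivAt g 0 s := by
      intro s hs
      have hsne : s ≠ 0 := fun h => h0I (h ▸ hs)
      have hφne : φ s ≠ 0 := (hpos s hs).ne'
      have h1 : HasDerivAt (fun x => (φ x)⁻¹ - c ^ 2 * x ^ 4 - 1)
          (-(deriv φ s) / φ s ^ 2 - c ^ 2 * (4 * s ^ 3)) s := by
        have := (((hdiff s hs).hasDerivAt.inv hφne).sub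
          ((hasDerivAt_pow 4 s).const_mul (c ^ 2))).sub_const 1
        exact this.congr_deriv (by norm_num)
      have h2 : HasDerivAt (fun x : ℝ => x ^ 2) (2 * s) s := by
        simpa using hasDerivAt_pow 2 s
      have h3 := h1.div h2 (pow_ne_zero 2 hsne)
      refine h3.congr_deriv ?_
      have hode' := hode s hs
      have hφ' : deriv φ s = (-(2 * (c ^ 2 * s ^ 4 - 1) * (φ s) ^ 2) - 2 * φ s) / s := by
        field_simp
        linarith
      rw [hφ']
      field_simp
      ring
    obtain ⟨s₀, hs₀⟩ := hIne
    refine ⟨g s₀, fun s hs => ?_⟩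
    have hgd : DifferentiableOn ℝ g I := fun x hx =>
      ((key x hx).differentiableAt).differentiableWithinAt
    have hconst : g s = g s₀ := by
      apply hconv.is_const_of_fderivWithin_eq_zero hgd _ hs hs₀
      intro x hx
      rw [fderivWithin_of_isOpen hIo hx]
      have : deriv g x = 0 := (key x hx).deriv
      ext
      simp [← toSpanSingleton_deriv, this]
    have hsne : s ≠ 0 := fun h => h0I (h ▸ hs)
    have h4 : ((φ s)⁻¹ - c ^ 2 * s ^ 4 - 1) / s ^ 2 = g s₀ := hconst
    field_simp at h4
    rw [inv_eq_one_div]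
    linarith
  · intro φ c₂ h s hs
    have hsne : s ≠ 0 := fun h' => h0I (h' ▸ hs)
    obtain ⟨heq, hposψ⟩ := h s hs
    set ψ : ℝ → ℝ := fun x => c ^ 2 * x ^ 4 + c₂ * x ^ 2 + 1 with hψ
    have hφ : ∀ x ∈ I, φ x = (ψ x)⁻¹ := by
      intro x hx
      obtain ⟨heq', hp'⟩ := h x hx
      show φ x = (c ^ 2 * x ^ 4 + c₂ * x ^ 2 + 1)⁻¹
      rw [← heq', inv_inv]
    have hψd : HasDerivAt ψ (c ^ 2 * (4 * s ^ 3) + c₂ * (2 * s)) s := by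
      have := (((hasDerivAt_pow 4 s).const_mul (c ^ 2)).add
        ((hasDerivAt_pow 2 s).const_mul c₂)).add_const 1
      exact this.congr_deriv (by norm_num)
    have hψsne : ψ s ≠ 0 := hposψ.ne'
    have hderiv : deriv φ s = -(c ^ 2 * (4 * s ^ 3) + c₂ * (2 * s)) / ψ s ^ 2 := by
      have hEq : φ =ᶠ[nhds s] fun x => (ψ x)⁻¹ :=
        Filter.eventuallyEq_of_mem (hIo.mem_nhds hs) hφ
      rw [hEq.deriv_eq]; exact (hψd.inv hψsne).deriv
    rw [hderiv, hφ s hs]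
    show s * (-(c ^ 2 * (4 * s ^ 3) + c₂ * (2 * s)) / (c ^ 2 * s ^ 4 + c₂ * s ^ 2 + 1) ^ 2) +
      2 * (c ^ 2 * s ^ 4 - 1) * ((c ^ 2 * s ^ 4 + c₂ * s ^ 2 + 1)⁻¹) ^ 2 +
      2 * (c ^ 2 * s ^ 4 + c₂ * s ^ 2 + 1)⁻¹ = 0
    field_simp
    ring
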